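/- Under Assumption 1, for every μ ∈ Δ(Ω) and every n ∈ ℕ there exists an optimal n-step sequential persuasion starting from μ, i.e., an n-step sequential persuasion S^{(n)} starting from μ with 𝒱(S^{(n)}) = v_n(μ). -/

import Mathlib

open Filter Topology
open scoped Classical

noncomputable section

/-- Δ(Ω): beliefs, i.e. probability distributions on the finite state space Ω,
as a subspace of Ω → ℝ (its topology agrees with the total-variation one). -/
abbrev Belief (Ω : Type*) [Fintype Ω] :=
  {p : Ω → ℝ // (∀ ω, 0 ≤ p ω) ∧ ∑ ω, p ω = 1}

variable {Ω : Type*} [Fintype Ω]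

/-- An element of F₀: a finite-support experiment, i.e. a finitely supported probability
distribution over beliefs (keys are the distinct posteriors p_j, values the positive
weights λ_j). -/
structure SPExp (Ω : Type*) [Fintype Ω] where
  w : Belief Ω →₀ ℝ
  nonneg : ∀ p, 0 ≤ w p
  sum_one : ∑ p ∈ w.support, w p = 1

namespace SPExp

/-- τ(e): the support of an experiment. -/
def tau (e : SPExp Ω) : Finset (Belief Ω) := e.w.support

/-- Expectation of a real-valued function under an experiment. -/
def expect (e : SPExp Ω) (f : Belief Ω → ℝ) : ℝ := ∑ p ∈ e.w.support, e.w p * f p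

/-- σ(e): the barycenter (expectation) of an experiment. -/
def sigma (e : SPExp Ω) : Belief Ω :=
  ⟨fun ω => ∑ p ∈ e.w.support, e.w p * p.val ω,
   fun ω => Finset.sum_nonneg fun p _ => mul_nonneg (e.nonneg p) (p.2.1 ω),
   by
     calc ∑ ω, ∑ p ∈ e.w.support, e.w p * p.val ω
         = ∑ p ∈ e.w.support, ∑ ω, e.w p * p.val ω := Finset.sum_comm
       _ = ∑ p ∈ e.w.support, e.w p * ∑ ω, p.val ω := by
           refine Finset.sum_congr rfl fun p _ => ?_
           rw [Finset.mul_sum]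
       _ = ∑ p ∈ e.w.support, e.w p := by
           refine Finset.sum_congr rfl fun p _ => ?_
           rw [p.2.2, mul_one]
       _ = 1 := e.sum_one⟩

/-- The trivial experiment (1, p). -/
def triv (p : Belief Ω) : SPExp Ω where
  w := Finsupp.single p 1
  nonneg := fun q => by
    rw [Finsupp.single_apply]
    split <;> norm_num
  sum_one := by
    rw [Finsupp.support_single_ne_zero _ one_ne_zero]
    simp

end SPExp

/-- T: the set of trivial experiments. -/
def Trivials (Ω : Type*) [Fintype Ω] : Set (SPExp Ω) := Set.range SPExp.triv

/-- Weak convergence of experiments, viewed as Borel probability measures on Δ(Ω). -/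
def WeakTendsto (es : ℕ → SPExp Ω) (e : SPExp Ω) : Prop :=
  ∀ f : Belief Ω → ℝ, Continuous f →
    Tendsto (fun i => (es i).expect f) atTop (𝓝 (e.expect f))

/-- Convergence of beliefs in total variation. -/
def TVTendsto (ps : ℕ → Belief Ω) (p : Belief Ω) : Prop :=
  Tendsto (fun i => ∑ ω, |(ps i).val ω - p.val ω|) atTop (𝓝 0)

/-- Histories, most recent step first: entries are (experiment taken, realized posterior);
the starting belief is kept separately. -/
abbrev Hist (Ω : Type*) [Fintype Ω] := List (SPExp Ω × Belief Ω)

/-- last(ξ): the current belief after history ξ started at μ. -/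
def lastBelief (μ : Belief Ω) : Hist Ω → Belief Ω
  | [] => μ
  | (_, p) :: _ => p

/-- Pr[ξ]: the probability of a history. -/
def histProb : Hist Ω → ℝ
  | [] => 1
  | (e, p) :: ξ => e.w p * histProb ξ

/-- A sequential persuasion starting from μ with feasible experiments F, given by its
history-dependent choice of the next (feasible, Bayes-plausible) experiment.  An n-step
sequential persuasion is such a strategy used for n steps; an infinite sequential
persuasion is the strategy itself. -/
structure SeqP {Ω : Type*} [Fintype Ω] (F : Set (SPExp Ω)) (μ : Belief Ω) where
  next : Hist Ω → SPExp Ω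
  feasible : ∀ ξ, next ξ ∈ F
  bayes : ∀ ξ, (next ξ).sigma = lastBelief μ ξ

variable {F : Set (SPExp Ω)} {μ : Belief Ω}

/-- Expectation of g over the n-step histories of S extending ξ. -/
def histExp (S : SeqP F μ) (g : Hist Ω → ℝ) : ℕ → Hist Ω → ℝ
  | 0, ξ => g ξ
  | n + 1, ξ => (S.next ξ).expect fun p => histExp S g n ((S.next ξ, p) :: ξ)

/-- Ξ_n: the set of n-step histories of S. -/
def Hists (S : SeqP F μ) : ℕ → Set (Hist Ω)
  | 0 => {[]}
  | n + 1 => {ξ' | ∃ ξ ∈ Hists S n, ∃ p ∈ (S.next ξ).tau, ξ' = (S.next ξ, p) :: ξ}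

/-- ξ padded by l trivial steps. -/
def padHist (μ : Belief Ω) (ξ : Hist Ω) (l : ℕ) : Hist Ω :=
  List.replicate l (SPExp.triv (lastBelief μ ξ), lastBelief μ ξ) ++ ξ

/-- S terminates after ξ: all subsequent choices (along trivial continuations of ξ)
are the trivial experiment. -/
def TerminatesAfter (S : SeqP F μ) (ξ : Hist Ω) : Prop :=
  ∀ l : ℕ, S.next (padHist μ ξ l) = SPExp.triv (lastBelief μ ξ)

/-- 𝒱(S⁽ⁿ⁾) = E[v(b_n)], the expected utility of the n-step persuasion given by the
first n steps of S. -/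
def stepUtility (v : Belief Ω → ℝ) (S : SeqP F μ) (n : ℕ) : ℝ :=
  histExp S (fun ξ => v (lastBelief μ ξ)) n []

/-- Pr[S terminates after n steps]. -/
def termProb (S : SeqP F μ) (n : ℕ) : ℝ :=
  histExp S (fun ξ => if TerminatesAfter S ξ then 1 else 0) n []

/-- 𝒱(S) for an infinite sequential persuasion S. -/
def infUtility (v : Belief Ω → ℝ) (S : SeqP F μ) : ℝ :=
  ⨆ n : ℕ, histExp S (fun ξ => if TerminatesAfter S ξ then v (lastBelief μ ξ) else 0) n []

/-- Pr[b_n ∈ O] for the belief b_n induced by S after n steps. -/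
def massIn (S : SeqP F μ) (O : Set (Belief Ω)) (n : ℕ) : ℝ :=
  histExp S (fun ξ => if lastBelief μ ξ ∈ O then 1 else 0) n []

/-- v_n(p): the optimal value over n-step sequential persuasions starting from p. -/
def vN (F : Set (SPExp Ω)) (v : Belief Ω → ℝ) (n : ℕ) (p : Belief Ω) : ℝ :=
  ⨆ S : SeqP F p, stepUtility v S n

/-- v_∞(p): the optimal value over infinite sequential persuasions starting from p. -/
def vInf (F : Set (SPExp Ω)) (v : Belief Ω → ℝ) (p : Belief Ω) : ℝ :=
  ⨆ S : SeqP F p, infUtility v S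

/-- Assumption 1: a uniform support bound h, and weak closedness of F. -/
def Assumption1 (F : Set (SPExp Ω)) (h : ℕ) : Prop :=
  (∀ e ∈ F, e.tau.card ≤ h) ∧
  ∀ es : ℕ → SPExp Ω, (∀ i, es i ∈ F) → ∀ e : SPExp Ω, WeakTendsto es e → e ∈ F

/-- Shannon entropy of a belief. -/
def entropy (p : Belief Ω) : ℝ := -∑ ω, p.val ω * Real.log (p.val ω)

/-- Assumption 2: every nontrivial feasible experiment lowers expected entropy by δ. -/
def Assumption2 (F : Set (SPExp Ω)) (δ : ℝ) : Prop :=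
  ∀ e ∈ F \ Trivials Ω, e.expect entropy ≤ entropy e.sigma - δ

/-- S is (effectively) an n-step sequential persuasion: after n steps it only takes
trivial experiments. -/
def IsNStep (S : SeqP F μ) (n : ℕ) : Prop :=
  ∀ ξ : Hist Ω, n ≤ ξ.length → S.next ξ = SPExp.triv (lastBelief μ ξ)

/-- Assumption 3 at prior μ: a sequence of finite-step sequential persuasions whose
values tend to v_∞(μ) and which terminate at a uniform rate. -/
def Assumption3 (F : Set (SPExp Ω)) (v : Belief Ω → ℝ) (μ : Belief Ω) : Prop :=
  ∃ (nk : ℕ → ℕ) (Sk : ℕ → SeqP F μ),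
    (∀ k, IsNStep (Sk k) (nk k)) ∧
    Tendsto (fun k => stepUtility v (Sk k) (nk k)) atTop (𝓝 (vInf F v μ)) ∧
    ∀ ε : ℝ, 0 < ε → ∃ N : ℕ, ∀ k, N ≤ nk k → 1 - ε ≤ termProb (Sk k) N

/-- v̂: the concave closure of v (the value of unconstrained Bayesian persuasion). -/
def concaveClosure (v : Belief Ω → ℝ) (p : Belief Ω) : ℝ :=
  sSup {x : ℝ | ∃ e : SPExp Ω, e.sigma = p ∧ x = e.expect v}

/-- O is implementable for (μ, F). -/
def Implementable (F : Set (SPExp Ω)) (μ : Belief Ω) (O : Set (Belief Ω)) : Prop :=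
  ∀ ε : ℝ, 0 < ε → ∃ (n : ℕ) (S : SeqP F μ), 1 - ε < massIn S O n

/-- S is a Markov sequential persuasion compatible with (μ, D, Z, ρ). -/
def MarkovCompatible (S : SeqP F μ) (D Z : Set (Belief Ω)) (ρ : Belief Ω → SPExp Ω) : Prop :=
  ∀ ξ : Hist Ω,
    (lastBelief μ ξ ∈ D → S.next ξ = ρ (lastBelief μ ξ)) ∧
    (lastBelief μ ξ ∈ Z → S.next ξ = SPExp.triv (lastBelief μ ξ))

/-- The j-th child of vertex m at depth n of the infinite h-ary tree. -/
def treeChild {h n : ℕ} (m : Fin (h ^ n)) (j : Fin h) : Fin (h ^ (n + 1)) :=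
  ⟨m.val * h + j.val, by
    have h1 : m.val + 1 ≤ h ^ n := m.isLt
    have h2 : j.val < h := j.isLt
    calc m.val * h + j.val < m.val * h + h := by omega
      _ = (m.val + 1) * h := by ring
      _ ≤ h ^ n * h := Nat.mul_le_mul h1 le_rfl
      _ = h ^ (n + 1) := (pow_succ h n).symm⟩

/-- An h-branching sequential persuasion starting from μ. -/
structure HBranch (Ω : Type*) [Fintype Ω] (F : Set (SPExp Ω)) (h : ℕ) (μ : Belief Ω) where
  π : ∀ n : ℕ, Fin (h ^ n) → ℝ
  β : ∀ n : ℕ, Fin (h ^ n) → Belief Ω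
  η : ∀ n : ℕ, Fin (h ^ n) → SPExp Ω
  π_nonneg : ∀ n m, 0 ≤ π n m
  π_sum : ∀ n : ℕ, ∑ m, π n m = 1
  η_mem : ∀ n m, η n m ∈ F
  β_root : ∀ m, β 0 m = μ
  compat_sigma : ∀ n m, (η n m).sigma = β n m
  compat_tau : ∀ (n : ℕ) (m : Fin (h ^ n)), ∀ p ∈ (η n m).tau,
    ∃ j : Fin h, β (n + 1) (treeChild m j) = p
  consistent : ∀ (n : ℕ) (m : Fin (h ^ n)) (p : Belief Ω),
    (∑ j : Fin h, if β (n + 1) (treeChild m j) = p then π (n + 1) (treeChild m j) else 0)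
      = π n m * (η n m).w p

/-- c' (at depth n + l) is a descendant of c (at depth n) in the h-ary tree. -/
def Descendant {h : ℕ} : {n : ℕ} → (l : ℕ) → Fin (h ^ n) → Fin (h ^ (n + l)) → Prop
  | _, 0, c, c' => c = c'
  | _, l + 1, c, c' => ∃ c'' j, Descendant l c c'' ∧ c' = treeChild c'' j

namespace HBranch

variable {h : ℕ}

/-- B terminates after vertex m at depth n. -/
def TermAfter (B : HBranch Ω F h μ) (n : ℕ) (m : Fin (h ^ n)) : Prop :=
  B.η n m ∈ Trivials Ω ∧
  ∀ (l : ℕ) (c' : Fin (h ^ (n + l))), Descendant l m c' → 0 < B.π (n + l) c' →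
    B.η (n + l) c' ∈ Trivials Ω

/-- Pr[B terminates after n steps]. -/
def termProb (B : HBranch Ω F h μ) (n : ℕ) : ℝ :=
  ∑ m : Fin (h ^ n), if B.TermAfter n m then B.π n m else 0

end HBranch

/-- B represents the infinite sequential persuasion S (via maps r_n : C_n → Ξ_n). -/
def Represents (S : SeqP F μ) {h : ℕ} (B : HBranch Ω F h μ) : Prop :=
  ∃ r : ∀ n : ℕ, Fin (h ^ n) → Hist Ω,
    ∀ n : ℕ,
      (∀ c, r n c ∈ Hists S n) ∧
      (∀ ξ ∈ Hists S n, histProb ξ = ∑ c, if r n c = ξ then B.π n c else 0) ∧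
      (∀ c, lastBelief μ (r n c) = B.β n c ∧ S.next (r n c) = B.η n c) ∧
      (∀ l : ℕ, ∀ ξ ∈ Hists S n, ∀ ξ' ∈ Hists S (n + l),
        (ξ <:+ ξ' ↔
          ∀ c' : Fin (h ^ (n + l)), r (n + l) c' = ξ' →
            ∃ c : Fin (h ^ n), r n c = ξ ∧ Descendant l c c'))

/-- The number of nontrivial experiments taken along a history. -/
def nontrivCount (ξ : Hist Ω) : ℕ :=
  ξ.countP fun s => decide (s.1 ∉ Trivials Ω)

end


/- ======================= Auxiliary development ======================= -/
noncomputable section AuxOpt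
open Filter Topology

namespace SPOptAux

variable {Ω : Type*} [Fintype Ω]

/- ---- basic expectation lemmas ---- -/

theorem expect_congr (e : SPExp Ω) {f g : Belief Ω → ℝ} (h : ∀ p, f p = g p) :
    e.expect f = e.expect g :=
  Finset.sum_congr rfl fun p _ => by rw [h]

theorem expect_mono (e : SPExp Ω) {f g : Belief Ω → ℝ} (h : ∀ p, f p ≤ g p) :
    e.expect f ≤ e.expect g :=
  Finset.sum_le_sum fun p _ => mul_le_mul_of_nonneg_left (h p) (e.nonneg p)

theorem expect_const (e : SPExp Ω) (c : ℝ) : e.expect (fun _ => c) = c := by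
  unfold SPExp.expect
  rw [← Finset.sum_mul, e.sum_one, one_mul]

theorem expect_le (e : SPExp Ω) {f : Belief Ω → ℝ} {C : ℝ} (h : ∀ p, f p ≤ C) :
    e.expect f ≤ C :=
  (expect_mono e h).trans_eq (expect_const e C)

theorem triv_expect (p : Belief Ω) (f : Belief Ω → ℝ) : (SPExp.triv p).expect f = f p := by
  unfold SPExp.expect SPExp.triv
  rw [Finsupp.support_single_ne_zero _ one_ne_zero]
  simp

theorem sigma_val (e : SPExp Ω) (ω : Ω) : e.sigma.val ω = e.expect (fun p => p.val ω) := rfl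

theorem triv_sigma (p : Belief Ω) : (SPExp.triv p).sigma = p :=
  Subtype.ext (funext fun ω => by rw [sigma_val, triv_expect])

theorem triv_mem (p : Belief Ω) : SPExp.triv p ∈ Trivials Ω := ⟨p, rfl⟩

/- ---- parametrized experiments ---- -/

variable {h : ℕ}

theorem sum_mk (lam : Fin h → ℝ) (q : Fin h → Belief Ω) (g : Belief Ω → ℝ → ℝ)
    (hg0 : ∀ p, g p 0 = 0) (hgadd : ∀ p x y, g p (x + y) = g p x + g p y) :
    ((∑ j, Finsupp.single (q j) (lam j)).sum g) = ∑ j, g (q j) (lam j) := by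
  rw [← Finsupp.sum_finset_sum_index hg0 hgadd]
  exact Finset.sum_congr rfl fun j _ => Finsupp.sum_single_index (hg0 _)

/-- The experiment with posteriors `q j` and weights `lam j`. -/
def mkExp (lam : Fin h → ℝ) (q : Fin h → Belief Ω) (h0 : ∀ j, 0 ≤ lam j)
    (h1 : ∑ j, lam j = 1) : SPExp Ω where
  w := ∑ j, Finsupp.single (q j) (lam j)
  nonneg := fun p => by
    rw [Finsupp.finset_sum_apply]
    refine Finset.sum_nonneg fun j _ => ?_
    rw [Finsupp.single_apply]
    split
    · exact h0 j
    · exact le_refl 0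
  sum_one := by
    have hs : ((∑ j, Finsupp.single (q j) (lam j)).sum fun _ x => x) = ∑ j, lam j :=
      sum_mk lam q _ (fun _ => rfl) (fun _ _ _ => rfl)
    simpa [Finsupp.sum] using hs.trans h1

theorem expect_eq_finsuppSum (e : SPExp Ω) (f : Belief Ω → ℝ) :
    e.expect f = e.w.sum (fun p x => x * f p) := rfl

theorem mkExp_expect (lam : Fin h → ℝ) (q : Fin h → Belief Ω) (h0 : ∀ j, 0 ≤ lam j)
    (h1 : ∑ j, lam j = 1) (f : Belief Ω → ℝ) :
    (mkExp lam q h0 h1).expect f = ∑ j, lam j * f (q j) := by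
  rw [expect_eq_finsuppSum]
  exact sum_mk lam q _ (fun p => zero_mul _) (fun p x y => add_mul x y _)

/-- Every experiment with support of size `≤ h` has an `h`-point parametrization. -/
theorem exists_param (e : SPExp Ω) (hcard : e.tau.card ≤ h) :
    ∃ (lam : Fin h → ℝ) (q : Fin h → Belief Ω),
      (∀ j, 0 ≤ lam j) ∧ (∑ j, lam j = 1) ∧
      ∀ f : Belief Ω → ℝ, e.expect f = ∑ j, lam j * f (q j) := by
  classical
  set E := e.tau.equivFin with hE
  set q : Fin h → Belief Ω := fun j =>
    if hj : (j : ℕ) < e.tau.card then ((E.symm ⟨j, hj⟩ : e.tau) : Belief Ω) else e.sigma with hq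
  set lam : Fin h → ℝ := fun j =>
    if hj : (j : ℕ) < e.tau.card then e.w ((E.symm ⟨j, hj⟩ : e.tau) : Belief Ω) else 0 with hlam
  have key : ∀ f : Belief Ω → ℝ, ∑ j, lam j * f (q j) = e.expect f := by
    intro f
    set g : ℕ → ℝ := fun i =>
      if hj : i < e.tau.card then
        e.w ((E.symm ⟨i, hj⟩ : e.tau) : Belief Ω) * f ((E.symm ⟨i, hj⟩ : e.tau) : Belief Ω)
      else 0 with hg
    have step1 : ∑ j : Fin h, lam j * f (q j) = ∑ j : Fin h, g (j : ℕ) := by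
      refine Finset.sum_congr rfl fun j _ => ?_
      by_cases hj : (j : ℕ) < e.tau.card
      · rw [hlam, hq, hg]
        simp only [dif_pos hj]
      · rw [hlam, hq, hg]
        simp only [dif_neg hj, zero_mul]
    have step2 : ∑ j : Fin h, g (j : ℕ) = ∑ i ∈ Finset.range h, g i :=
      Fin.sum_univ_eq_sum_range g h
    have step3 : ∑ i ∈ Finset.range h, g i = ∑ i ∈ Finset.range e.tau.card, g i := by
      refine (Finset.sum_subset (Finset.range_subset_range.2 hcard) fun i _ hi => ?_).symm
      rw [Finset.mem_range, not_lt] at hi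
      rw [hg]
      exact dif_neg (not_lt.2 hi)
    have step4 : ∑ i ∈ Finset.range e.tau.card, g i
        = ∑ i : Fin e.tau.card,
            e.w ((E.symm i : e.tau) : Belief Ω) * f ((E.symm i : e.tau) : Belief Ω) := by
      rw [← Fin.sum_univ_eq_sum_range g e.tau.card]
      refine Finset.sum_congr rfl fun i _ => ?_
      rw [hg]
      simp only [dif_pos i.isLt, Fin.eta]
    have step5 : ∑ i : Fin e.tau.card,
          e.w ((E.symm i : e.tau) : Belief Ω) * f ((E.symm i : e.tau) : Belief Ω)
        = ∑ x : e.tau, e.w (x : Belief Ω) * f (x : Belief Ω) :=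
      E.symm.sum_comp (fun x : e.tau => e.w (x : Belief Ω) * f (x : Belief Ω))
    have step6 : ∑ x : e.tau, e.w (x : Belief Ω) * f (x : Belief Ω)
        = ∑ p ∈ e.tau, e.w p * f p := Finset.sum_coe_sort e.tau (fun p => e.w p * f p)
    rw [step1, step2, step3, step4, step5, step6]
    rfl
  have h0 : ∀ j, 0 ≤ lam j := fun j => by
    rw [hlam]
    dsimp only
    split
    · exact e.nonneg _
    · exact le_refl 0
  have h1 : ∑ j, lam j = 1 := by
    have hk := key (fun _ => 1)
    rw [expect_const] at hk
    simpa using hk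
  exact ⟨lam, q, h0, h1, fun f => (key f).symm⟩

/- ---- compactness ---- -/

instance : CompactSpace (Belief Ω) :=
  isCompact_iff_compactSpace.mp (isCompact_stdSimplex ℝ Ω)

/- ---- the one-step upper semicontinuous envelope ---- -/

theorem perj {C : ℝ} {f : Belief Ω → ℝ} (husc : UpperSemicontinuous f)
    (hf0 : ∀ p, 0 ≤ f p) (hfC : ∀ p, f p ≤ C)
    {lamk : ℕ → ℝ} {qk : ℕ → Belief Ω} {lam : ℝ} {q : Belief Ω}
    (hlamk0 : ∀ k, 0 ≤ lamk k) (hlam1 : lam ≤ 1)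
    (hlamc : Tendsto lamk atTop (𝓝 lam)) (hqc : Tendsto qk atTop (𝓝 q))
    {ε : ℝ} (hε : 0 < ε) :
    ∀ᶠ k in atTop, lamk k * f (qk k) ≤ lam * f q + ε := by
  have hC : (0:ℝ) ≤ C := le_trans (hf0 q) (hfC q)
  have hCε : (0:ℝ) < 2 * (C + ε) := by linarith
  set δ' := ε / (2 * (C + ε)) with hδ'def
  have hδ' : 0 < δ' := div_pos hε hCε
  have h1 : ∀ᶠ k in atTop, f (qk k) < f q + ε / 2 :=
    hqc.eventually (husc q (f q + ε / 2) (by linarith))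
  have h2 : ∀ᶠ k in atTop, lamk k < lam + δ' :=
    hlamc.eventually (gt_mem_nhds (by linarith))
  filter_upwards [h1, h2] with k hk1 hk2
  have e0 : 0 ≤ f q + ε / 2 := by have := hf0 q; linarith
  have c1 : lamk k * f (qk k) ≤ lamk k * (f q + ε / 2) :=
    mul_le_mul_of_nonneg_left hk1.le (hlamk0 k)
  have c2 : lamk k * (f q + ε / 2) ≤ (lam + δ') * (f q + ε / 2) :=
    mul_le_mul_of_nonneg_right hk2.le e0
  have e2 : δ' * (C + ε) = ε / 2 := by
    rw [hδ'def]
    field_simp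
  have e3 : δ' * (f q + ε / 2) ≤ ε / 2 := by
    have hle : f q + ε / 2 ≤ C + ε := by have := hfC q; linarith
    calc δ' * (f q + ε / 2) ≤ δ' * (C + ε) := mul_le_mul_of_nonneg_left hle hδ'.le
      _ = ε / 2 := e2
  have hlam0 : 0 ≤ lam := le_of_tendsto_of_tendsto' tendsto_const_nhds hlamc hlamk0
  have e4 : lam * (ε / 2) ≤ ε / 2 := by nlinarith
  nlinarith [c1, c2, e3, e4]

theorem core {F : Set (SPExp Ω)} (hA1 : Assumption1 F h)
    {C : ℝ} {f : Belief Ω → ℝ} (husc : UpperSemicontinuous f)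
    (hf0 : ∀ p, 0 ≤ f p) (hfC : ∀ p, f p ≤ C)
    (ek : ℕ → SPExp Ω) (hekF : ∀ k, ek k ∈ F) (p : Belief Ω)
    (hσ : ∀ ω, Tendsto (fun k => (ek k).sigma.val ω) atTop (𝓝 (p.val ω))) :
    ∃ e ∈ F, e.sigma = p ∧
      ∀ ε : ℝ, 0 < ε → ∃ᶠ k in atTop, (ek k).expect f ≤ e.expect f + ε := by
  classical
  have hh : 0 < h := by
    rcases Nat.eq_zero_or_pos h with h0 | h0
    · exfalso
      have hc := hA1.1 (ek 0) (hekF 0)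
      rw [h0, Nat.le_zero, Finset.card_eq_zero] at hc
      have hs := (ek 0).sum_one
      have hsupp : (ek 0).w.support = ∅ := hc
      rw [hsupp] at hs
      simp at hs
    · exact h0
  choose lam0 q0 hl0 hl1 hform using fun k => exists_param (ek k) (hA1.1 (ek k) (hekF k))
  set x : ℕ → (Fin h → ℝ) × (Fin h → Belief Ω) := fun k => (lam0 k, q0 k) with hx
  have hK : IsCompact ((stdSimplex ℝ (Fin h)) ×ˢ (Set.univ : Set (Fin h → Belief Ω))) :=
    (isCompact_stdSimplex ℝ (Fin h)).prod isCompact_univ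
  have hmem : ∀ k, x k ∈ (stdSimplex ℝ (Fin h)) ×ˢ (Set.univ : Set (Fin h → Belief Ω)) :=
    fun k => ⟨⟨hl0 k, hl1 k⟩, trivial⟩
  obtain ⟨a, haK, φ, hφ, hconv⟩ := hK.tendsto_subseq hmem
  have ha1 : ∀ j, 0 ≤ a.1 j := haK.1.1
  have ha2 : ∑ j, a.1 j = 1 := haK.1.2
  have hle1 : ∀ j, a.1 j ≤ 1 := fun j =>
    (Finset.single_le_sum (fun i _ => ha1 i) (Finset.mem_univ j)).trans_eq ha2
  have hlamc : ∀ j, Tendsto (fun k => lam0 (φ k) j) atTop (𝓝 (a.1 j)) := by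
    intro j
    have := (((continuous_apply j).comp continuous_fst).tendsto a).comp hconv
    exact this
  have hqc : ∀ j, Tendsto (fun k => q0 (φ k) j) atTop (𝓝 (a.2 j)) := by
    intro j
    have := (((continuous_apply j).comp continuous_snd).tendsto a).comp hconv
    exact this
  set e : SPExp Ω := mkExp a.1 a.2 ha1 ha2 with he
  have hexp : ∀ g : Belief Ω → ℝ, Continuous g →
      Tendsto (fun k => (ek (φ k)).expect g) atTop (𝓝 (e.expect g)) := by
    intro g hg
    have hfm : ∀ k, (ek (φ k)).expect g = ∑ j, lam0 (φ k) j * g (q0 (φ k) j) :=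
      fun k => hform (φ k) g
    have hlim : Tendsto (fun k => ∑ j, lam0 (φ k) j * g (q0 (φ k) j)) atTop
        (𝓝 (∑ j, a.1 j * g (a.2 j))) :=
      tendsto_finset_sum _ fun j _ => (hlamc j).mul ((hg.tendsto _).comp (hqc j))
    rw [he, mkExp_expect]
    simpa only [← hfm] using hlim
  have heF : e ∈ F := hA1.2 (fun k => ek (φ k)) (fun k => hekF (φ k)) e hexp
  have heσ : e.sigma = p := by
    apply Subtype.ext
    funext ω
    have hev : Continuous (fun b : Belief Ω => b.val ω) :=
      (continuous_apply ω).comp continuous_subtype_val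
    have h1 : Tendsto (fun k => (ek (φ k)).sigma.val ω) atTop (𝓝 (e.sigma.val ω)) :=
      hexp _ hev
    have h2 : Tendsto (fun k => (ek (φ k)).sigma.val ω) atTop (𝓝 (p.val ω)) :=
      (hσ ω).comp hφ.tendsto_atTop
    exact tendsto_nhds_unique h1 h2
  refine ⟨e, heF, heσ, ?_⟩
  intro ε hε
  have hεh : 0 < ε / (h : ℝ) := div_pos hε (Nat.cast_pos.2 hh)
  have hall : ∀ᶠ k in atTop,
      ∀ j : Fin h, lam0 (φ k) j * f (q0 (φ k) j) ≤ a.1 j * f (a.2 j) + ε / h := by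
    rw [eventually_all]
    intro j
    exact perj husc hf0 hfC (fun k => hl0 (φ k) j) (hle1 j) (hlamc j) (hqc j) hεh
  have hev : ∀ᶠ k in atTop, (ek (φ k)).expect f ≤ e.expect f + ε := by
    filter_upwards [hall] with k hk
    have hsum : ∑ j, lam0 (φ k) j * f (q0 (φ k) j)
        ≤ ∑ j : Fin h, (a.1 j * f (a.2 j) + ε / h) :=
      Finset.sum_le_sum fun j _ => hk j
    rw [Finset.sum_add_distrib, Finset.sum_const, Finset.card_univ, Fintype.card_fin,
      nsmul_eq_mul, mul_div_cancel₀ ε (Nat.cast_ne_zero.2 hh.ne')] at hsum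
    rw [hform (φ k) f, he, mkExp_expect]
    exact hsum
  rw [frequently_atTop]
  intro m
  obtain ⟨k, hk1, hk2⟩ := ((hφ.tendsto_atTop.eventually_ge_atTop m).and hev).exists
  exact ⟨φ k, hk1, hk2⟩

/- ---- the optimal one-step value ---- -/

def vals (F : Set (SPExp Ω)) (f : Belief Ω → ℝ) (p : Belief Ω) : Set ℝ :=
  {x | ∃ e ∈ F, e.sigma = p ∧ x = e.expect f}

def Wop (F : Set (SPExp Ω)) (f : Belief Ω → ℝ) (p : Belief Ω) : ℝ := sSup (vals F f p)

variable {F : Set (SPExp Ω)} {f : Belief Ω → ℝ}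

theorem f_mem_vals (hTF : Trivials Ω ⊆ F) (f : Belief Ω → ℝ) (p : Belief Ω) :
    f p ∈ vals F f p :=
  ⟨SPExp.triv p, hTF (triv_mem p), triv_sigma p, (triv_expect p f).symm⟩

theorem vals_bddAbove {C : ℝ} (hfC : ∀ p, f p ≤ C) (p : Belief Ω) : BddAbove (vals F f p) := by
  refine ⟨C, fun x hx => ?_⟩
  obtain ⟨e, -, -, rfl⟩ := hx
  exact expect_le e hfC

theorem le_Wop (hTF : Trivials Ω ⊆ F) {C : ℝ} (hfC : ∀ p, f p ≤ C) (p : Belief Ω) :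
    f p ≤ Wop F f p :=
  le_csSup (vals_bddAbove hfC p) (f_mem_vals hTF f p)

theorem expect_le_Wop {C : ℝ} (hfC : ∀ p, f p ≤ C) {e : SPExp Ω} (heF : e ∈ F)
    {p : Belief Ω} (heσ : e.sigma = p) : e.expect f ≤ Wop F f p :=
  le_csSup (vals_bddAbove hfC p) ⟨e, heF, heσ, rfl⟩

theorem Wop_le (hTF : Trivials Ω ⊆ F) {C : ℝ} (hfC : ∀ p, f p ≤ C) (p : Belief Ω) :
    Wop F f p ≤ C := by
  refine csSup_le ⟨f p, f_mem_vals hTF f p⟩ fun x hx => ?_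
  obtain ⟨e, -, -, rfl⟩ := hx
  exact expect_le e hfC

theorem Wop_attained (hA1 : Assumption1 F h) (hTF : Trivials Ω ⊆ F)
    {C : ℝ} (husc : UpperSemicontinuous f) (hf0 : ∀ p, 0 ≤ f p) (hfC : ∀ p, f p ≤ C)
    (p : Belief Ω) :
    ∃ e ∈ F, e.sigma = p ∧ e.expect f = Wop F f p := by
  obtain ⟨u, -, hu, humem⟩ :=
    exists_seq_tendsto_sSup ⟨f p, f_mem_vals hTF f p⟩ (vals_bddAbove hfC p)
  choose ek hekF hekσ heke using humem
  have hσ : ∀ ω, Tendsto (fun k => (ek k).sigma.val ω) atTop (𝓝 (p.val ω)) := by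
    intro ω
    simp only [fun k => congrArg (fun b : Belief Ω => b.val ω) (hekσ k)]
    exact tendsto_const_nhds
  obtain ⟨e, heF, heσ, hfreq⟩ := core hA1 husc hf0 hfC ek hekF p hσ
  refine ⟨e, heF, heσ, le_antisymm (expect_le_Wop hfC heF heσ) ?_⟩
  by_contra hlt
  push_neg at hlt
  set ε := (Wop F f p - e.expect f) / 2 with hεdef
  have hε : 0 < ε := by rw [hεdef]; linarith
  have htend : Tendsto (fun k => (ek k).expect f) atTop (𝓝 (Wop F f p)) := by
    have : (fun k => (ek k).expect f) = u := funext fun k => (heke k).symm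
    rw [this]
    exact hu
  have hev : ∀ᶠ k in atTop, Wop F f p - ε < (ek k).expect f :=
    htend.eventually (lt_mem_nhds (by rw [hεdef]; linarith))
  obtain ⟨k, hk1, hk2⟩ := ((hfreq ε hε).and_eventually hev).exists
  rw [hεdef] at hk1 hk2
  linarith

theorem Wop_usc (hA1 : Assumption1 F h) (hTF : Trivials Ω ⊆ F)
    {C : ℝ} (husc : UpperSemicontinuous f) (hf0 : ∀ p, 0 ≤ f p) (hfC : ∀ p, f p ≤ C) :
    UpperSemicontinuous (Wop F f) := by
  intro p y hy
  by_contra hcon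
  have hseq : ∀ k : ℕ, ∃ p' : Belief Ω, dist p' p < 1 / (k + 1) ∧ y ≤ Wop F f p' := by
    intro k
    by_contra h'
    push_neg at h'
    exact hcon (Metric.eventually_nhds_iff.2
      ⟨1 / (k + 1), by positivity, fun p' hp' => h' p' hp'⟩)
  choose ps hpsd hpsy using hseq
  have hps : Tendsto ps atTop (𝓝 p) :=
    tendsto_iff_dist_tendsto_zero.2
      (squeeze_zero (fun k => dist_nonneg) (fun k => (hpsd k).le)
        tendsto_one_div_add_atTop_nhds_zero_nat)
  have hatt := fun k => Wop_attained hA1 hTF husc hf0 hfC (ps k)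
  choose ek hekF hekσ heke using hatt
  have hσ : ∀ ω, Tendsto (fun k => (ek k).sigma.val ω) atTop (𝓝 (p.val ω)) := by
    intro ω
    have hev : Continuous (fun b : Belief Ω => b.val ω) :=
      (continuous_apply ω).comp continuous_subtype_val
    have hbase : Tendsto (fun k => (ps k).val ω) atTop (𝓝 (p.val ω)) :=
      (hev.tendsto p).comp hps
    simpa only [fun k => congrArg (fun b : Belief Ω => b.val ω) (hekσ k)] using hbase
  obtain ⟨e, heF, heσ, hfreq⟩ := core hA1 husc hf0 hfC ek hekF p hσ
  have hWle : e.expect f ≤ Wop F f p := expect_le_Wop hfC heF heσ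
  have hyW : y ≤ Wop F f p := by
    refine le_of_forall_pos_le_add fun ε hε => ?_
    obtain ⟨k, hk⟩ := (hfreq ε hε).exists
    calc y ≤ Wop F f (ps k) := hpsy k
      _ = (ek k).expect f := (heke k).symm
      _ ≤ e.expect f + ε := hk
      _ ≤ Wop F f p + ε := by linarith
  exact absurd hyW (not_le.2 hy)

/- ---- the finite-horizon value functions ---- -/

def Vrec (F : Set (SPExp Ω)) (v : Belief Ω → ℝ) : ℕ → Belief Ω → ℝ
  | 0 => v
  | n + 1 => Wop F (Vrec F v n)

theorem Vrec_pack (hA1 : Assumption1 F h) (hTF : Trivials Ω ⊆ F)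
    {v : Belief Ω → ℝ} {Vlo Vhi : ℝ} (hVlo : 0 < Vlo)
    (hvlo : ∀ p, Vlo ≤ v p) (hvhi : ∀ p, v p ≤ Vhi) (husc : UpperSemicontinuous v) :
    ∀ n : ℕ, UpperSemicontinuous (Vrec F v n) ∧
      (∀ p, Vlo ≤ Vrec F v n p) ∧ (∀ p, Vrec F v n p ≤ Vhi) := by
  intro n
  induction n with
  | zero => exact ⟨husc, hvlo, hvhi⟩
  | succ n ih =>
    obtain ⟨ihu, ihlo, ihhi⟩ := ih
    have hf0 : ∀ p, 0 ≤ Vrec F v n p := fun p => le_trans hVlo.le (ihlo p)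
    refine ⟨Wop_usc hA1 hTF ihu hf0 ihhi, fun p => ?_, fun p => Wop_le hTF ihhi p⟩
    exact le_trans (ihlo p) (le_Wop hTF ihhi p)

end SPOptAux
end AuxOpt

/-- Corollary: under Assumption 1, an optimal n-step sequential persuasion exists. -/
theorem optimal_finite_exists {Ω : Type*} [Fintype Ω] [Nonempty Ω]
    (F : Set (SPExp Ω)) (hTF : Trivials Ω ⊆ F)
    (v : Belief Ω → ℝ) (Vlo Vhi : ℝ) (hVlo : 0 < Vlo) (hVV : Vlo ≤ Vhi)
    (hvlo : ∀ p, Vlo ≤ v p) (hvhi : ∀ p, v p ≤ Vhi)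
    (husc : UpperSemicontinuous v)
    (h : ℕ) (hA1 : Assumption1 F h) :
    ∀ (μ : Belief Ω) (n : ℕ), ∃ S : SeqP F μ, stepUtility v S n = vN F v n μ := by
  classical
  intro μ n
  have pack := SPOptAux.Vrec_pack hA1 hTF hVlo hvlo hvhi husc
  have hsel : ∀ (k : ℕ) (p : Belief Ω),
      ∃ e ∈ F, e.sigma = p ∧
        e.expect (SPOptAux.Vrec F v k) = SPOptAux.Vrec F v (k + 1) p := fun k p =>
    SPOptAux.Wop_attained hA1 hTF (pack k).1
      (fun p' => le_trans hVlo.le ((pack k).2.1 p')) (pack k).2.2 p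
  choose Emax hEF hEσ hEval using hsel
  let S : SeqP F μ :=
    { next := fun ξ => if ξ.length < n then Emax (n - 1 - ξ.length) (lastBelief μ ξ)
        else SPExp.triv (lastBelief μ ξ)
      feasible := fun ξ => by
        split
        · exact hEF _ _
        · exact hTF (SPOptAux.triv_mem _)
      bayes := fun ξ => by
        split
        · exact hEσ _ _
        · exact SPOptAux.triv_sigma _ }
  have hnext : ∀ ξ : Hist Ω, S.next ξ =
      if ξ.length < n then Emax (n - 1 - ξ.length) (lastBelief μ ξ)
      else SPExp.triv (lastBelief μ ξ) := fun ξ => rfl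
  have hexact : ∀ (k : ℕ) (ξ : Hist Ω), ξ.length + k = n →
      histExp S (fun ξ' => v (lastBelief μ ξ')) k ξ
        = SPOptAux.Vrec F v k (lastBelief μ ξ) := by
    intro k
    induction k with
    | zero => intro ξ _; rfl
    | succ k ih =>
      intro ξ hlen
      have hlt : ξ.length < n := by omega
      have hidx : n - 1 - ξ.length = k := by omega
      have hne : S.next ξ = Emax k (lastBelief μ ξ) := by
        rw [hnext ξ, if_pos hlt, hidx]
      simp only [histExp]
      rw [hne]
      rw [SPOptAux.expect_congr (Emax k (lastBelief μ ξ))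
        (f := fun p => histExp S (fun ξ' => v (lastBelief μ ξ')) k
          ((Emax k (lastBelief μ ξ), p) :: ξ))
        (g := fun p => SPOptAux.Vrec F v k p)
        (fun p => ih ((Emax k (lastBelief μ ξ), p) :: ξ)
          (by simp only [List.length_cons]; omega))]
      exact hEval k (lastBelief μ ξ)
  have hSval : stepUtility v S n = SPOptAux.Vrec F v n μ := hexact n [] (by simp)
  have hub : ∀ (T : SeqP F μ) (k : ℕ) (ξ : Hist Ω),
      histExp T (fun ξ' => v (lastBelief μ ξ')) k ξ
        ≤ SPOptAux.Vrec F v k (lastBelief μ ξ) := by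
    intro T k
    induction k with
    | zero => intro ξ; exact le_refl _
    | succ k ih =>
      intro ξ
      simp only [histExp]
      calc (T.next ξ).expect
            (fun p => histExp T (fun ξ' => v (lastBelief μ ξ')) k ((T.next ξ, p) :: ξ))
          ≤ (T.next ξ).expect (fun p => SPOptAux.Vrec F v k p) :=
            SPOptAux.expect_mono _ (fun p => ih ((T.next ξ, p) :: ξ))
        _ ≤ SPOptAux.Wop F (SPOptAux.Vrec F v k) (lastBelief μ ξ) :=
            SPOptAux.expect_le_Wop (pack k).2.2 (T.feasible ξ) (T.bayes ξ)
        _ = SPOptAux.Vrec F v (k + 1) (lastBelief μ ξ) := rfl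
  haveI : Nonempty (SeqP F μ) :=
    ⟨{ next := fun ξ => SPExp.triv (lastBelief μ ξ),
       feasible := fun ξ => hTF (SPOptAux.triv_mem _),
       bayes := fun ξ => SPOptAux.triv_sigma _ }⟩
  have hvn : vN F v n μ = SPOptAux.Vrec F v n μ := by
    refine le_antisymm (ciSup_le fun T => hub T n []) ?_
    have hbdd : BddAbove (Set.range fun T : SeqP F μ => stepUtility v T n) := by
      refine ⟨SPOptAux.Vrec F v n μ, ?_⟩
      rintro x ⟨T, rfl⟩
      exact hub T n []
    calc SPOptAux.Vrec F v n μ = stepUtility v S n := hSval.symm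
      _ ≤ vN F v n μ := le_ciSup hbdd S
  exact ⟨S, hSval.trans hvn.symm⟩
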